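/- arXiv:2406.02585 — 4 statements merged into one kernel-verified Lean document; each statement's English description precedes it below -/
import Mathlib

section
/- Let T and d be positive integers and suppose there exist vectors k_1, …, k_T and q_1, …, q_T in the Euclidean space ℝ^d such that for every index i, ⟨q_i, k_i⟩ = 1 and ⟨q_i, k_j⟩ = 0 whenever j < i. Then d ≥ T. (Hence an attention layer whose pre-softmax scores exactly realize the causal attention pattern on a length-T sequence requires an embedding dimension of at least T.) -/
/-- If vectors `k i`, `q i` in `ℝ^d` realize the causal attention pattern exactly
(`⟪q i, k i⟫ = 1` and `⟪q i, k j⟫ = 0` for `j < i`), then `d ≥ T`. -/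
theorem causal_pattern_needs_dim_ge_length
    (T d : ℕ) (hT : 0 < T) (hd : 0 < d)
    (k q : Fin T → EuclideanSpace ℝ (Fin d))
    (hdiag : ∀ i : Fin T, (inner ℝ (q i) (k i) : ℝ) = 1)
    (hlow : ∀ i j : Fin T, j < i → (inner ℝ (q i) (k j) : ℝ) = 0) :
    T ≤ d := by
  classical
  have hli : LinearIndependent ℝ k := by
    rw [linearIndependent_iff']
    intro s g hsum
    have key : ∀ n : ℕ, ∀ j ∈ s, T - n ≤ (j : ℕ) → g j = 0 := by
      intro n
      induction n with
      | zero => intro j _ hj; exact absurd j.2 (by omega)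
      | succ n ih =>
        intro j hj hjn
        by_cases hcase : T - n ≤ (j : ℕ)
        · exact ih j hj hcase
        · -- apply inner (q j) to the sum
          have h0 : (inner ℝ (q j) (∑ m ∈ s, g m • k m) : ℝ) = 0 := by
            rw [hsum]; simp
          rw [inner_sum] at h0
          simp only [real_inner_smul_right] at h0
          have hsum' : ∑ m ∈ s, g m * (inner ℝ (q j) (k m) : ℝ) = g j := by
            rw [Finset.sum_eq_single j]
            · rw [hdiag j, mul_one]
            · intro m hm hmj
              rcases lt_or_gt_of_ne hmj with h | h
              · rw [hlow j m h, mul_zero]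
              · rw [ih m hm (by have := h; omega), zero_mul]
            · intro h; exact absurd hj h
          rw [hsum'] at h0
          exact h0
    exact fun i hi => key T i hi (by omega)
  have := hli.fintype_card_le_finrank
  simpa using this
end

section
/- Let Token be the four-element alphabet {0, 1, [, ]}, let e : Token → ℝ^d be any token embedding, let F : (Fin 6 → ℝ^d) → (Fin 6 → ℝ^d) be any permutation-equivariant map, and let G : (Fin 6 → ℝ^d) → ℕ be any permutation-invariant map. Then the function l ↦ G(F(e ∘ l)) on length-6 token sequences does not compute the number of 1-tokens strictly between the first '[' and the first ']': it assigns equal values to the sequences ('[', '1', ']', '[', '0', ']') and ('[', '0', ']', '[', '1', ']'), whose targets are 1 and 0 respectively. -/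
/-- The four-element token alphabet `{0, 1, [, ]}`. -/
inductive Token : Type
  | zero
  | one
  | lbrack
  | rbrack
  deriving DecidableEq, Repr

open Token

/-- The number of `1`-tokens occurring strictly between the first `'['` and the
first `']'` following it. -/
def target (l : List Token) : ℕ :=
  (((l.dropWhile (· ≠ lbrack)).drop 1).takeWhile (· ≠ rbrack)).count one

/-- A non-causal Transformer with no position code (a permutation-equivariant body `F`
followed by a permutation-invariant readout `G`) cannot compute the contextual count:
it gives equal values on two length-6 sequences whose targets are `1` and `0`. -/
theorem nonCausal_NoPE_cannot_count
    (d : ℕ) (e : Token → EuclideanSpace ℝ (Fin d))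
    (F : (Fin 6 → EuclideanSpace ℝ (Fin d)) → Fin 6 → EuclideanSpace ℝ (Fin d))
    (G : (Fin 6 → EuclideanSpace ℝ (Fin d)) → ℕ)
    (hF : ∀ (σ : Equiv.Perm (Fin 6)) (X : Fin 6 → EuclideanSpace ℝ (Fin d)),
      F (X ∘ σ) = F X ∘ σ)
    (hG : ∀ (σ : Equiv.Perm (Fin 6)) (X : Fin 6 → EuclideanSpace ℝ (Fin d)),
      G (X ∘ σ) = G X) :
    G (F (e ∘ ![lbrack, one, rbrack, lbrack, zero, rbrack])) =
        G (F (e ∘ ![lbrack, zero, rbrack, lbrack, one, rbrack])) ∧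
    target [lbrack, one, rbrack, lbrack, zero, rbrack] = 1 ∧
    target [lbrack, zero, rbrack, lbrack, one, rbrack] = 0 := by
  refine ⟨?_, by decide, by decide⟩
  have h : (e ∘ ![lbrack, one, rbrack, lbrack, zero, rbrack]) ∘ Equiv.swap (1 : Fin 6) 4
      = e ∘ ![lbrack, zero, rbrack, lbrack, one, rbrack] := by
    funext i
    fin_cases i <;> simp [Equiv.swap_apply_of_ne_of_ne] <;> rfl
  calc G (F (e ∘ ![lbrack, one, rbrack, lbrack, zero, rbrack]))
      = G (F (e ∘ ![lbrack, one, rbrack, lbrack, zero, rbrack]) ∘ Equiv.swap (1 : Fin 6) 4) := (hG _ _).symm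
    _ = G (F ((e ∘ ![lbrack, one, rbrack, lbrack, zero, rbrack]) ∘ Equiv.swap (1 : Fin 6) 4)) := by rw [hF]
    _ = _ := by rw [h]
end

section
/- Let V be a real vector space, let v₁, v₀ ∈ V be linearly independent, and let w, b be positive reals. Then the map n ↦ (1 / (n·w + b)) • ((n·w) • v₁ + b • v₀) from ℕ to V is injective. -/
/-- If `v₁, v₀` are linearly independent and `w, b > 0`, the softmax-weighted readout
`n ↦ ((n·w) • v₁ + b • v₀) / (n·w + b)` is injective on `ℕ`. -/
theorem weighted_count_readout_injective
    {V : Type*} [AddCommGroup V] [Module ℝ V] (v₁ v₀ : V)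
    (hli : LinearIndependent ℝ ![v₁, v₀])
    (w b : ℝ) (hw : 0 < w) (hb : 0 < b) :
    Function.Injective
      (fun n : ℕ => (1 / ((n : ℝ) * w + b)) • (((n : ℝ) * w) • v₁ + b • v₀)) := by
  intro n m h
  simp only [smul_add, smul_smul] at h
  have hn : (0:ℝ) < (n : ℝ) * w + b := by positivity
  have hm : (0:ℝ) < (m : ℝ) * w + b := by positivity
  have key := (LinearIndependent.pair_iff.mp hli
    (1 / ((n : ℝ) * w + b) * ((n : ℝ) * w) - 1 / ((m : ℝ) * w + b) * ((m : ℝ) * w))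
    (1 / ((n : ℝ) * w + b) * b - 1 / ((m : ℝ) * w + b) * b)
    (by rw [sub_smul, sub_smul, sub_add_sub_comm, h, sub_self])).1
  have : (n : ℝ) = m := by
    rw [sub_eq_zero] at key
    field_simp at key
    nlinarith [key, mul_pos hw hb]
  exact_mod_cast this
end

section
/- Let l be a list over the alphabet {0, 1, [, ]} whose sublist of delimiter tokens equals k consecutive copies of the pattern ['[', ']']. Then for every n ≤ l.length, the length-n prefix of l contains exactly one more '[' token than ']' token if and only if there exists an index p < n with l[p] = '[' and no index q with p < q < n and l[q] = ']'. (That is, a position lies inside a delimited region exactly when its prefix bracket counts differ by one.) -/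
open Token

/-- `isDelim` holds exactly on `'['` and `']'`. -/
def isDelim : Token → Bool
  | lbrack => true
  | rbrack => true
  | _ => false

lemma alt_count (k : ℕ) : ∀ f : List Token,
    f <+: (List.replicate k [lbrack, rbrack]).flatten →
    (f.count lbrack = f.count rbrack + 1 ↔ f.getLast? = some lbrack) := by
  induction k with
  | zero =>
    intro f hf
    simp only [List.replicate_zero, List.flatten_nil, List.prefix_nil] at hf
    subst hf; simp
  | succ k ih =>
    intro f hf
    rw [List.replicate_succ, List.flatten_cons] at hf
    rcases List.prefix_cons_iff.mp hf with rfl | ⟨g, rfl, hg⟩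
    · simp
    rcases List.prefix_cons_iff.mp hg with rfl | ⟨h, rfl, hh⟩
    · simp
    · have key := ih h hh
      rcases h with _ | ⟨x, h'⟩
      · simp
      · rw [List.getLast?_cons_cons, List.getLast?_cons_cons, ← key]
        simp [List.count_cons]

lemma extend_nondelim (s : List Token) (a : Token)
    (h1 : a ≠ lbrack) (h2 : a ≠ rbrack) :
    (∃ p : ℕ, p < (s ++ [a]).length ∧ (s ++ [a])[p]? = some lbrack ∧
        ∀ q : ℕ, p < q → q < (s ++ [a]).length → (s ++ [a])[q]? ≠ some rbrack) ↔
    (∃ p : ℕ, p < s.length ∧ s[p]? = some lbrack ∧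
        ∀ q : ℕ, p < q → q < s.length → s[q]? ≠ some rbrack) := by
  simp only [List.length_append, List.length_singleton]
  constructor
  · rintro ⟨p, hp, hl, hq⟩
    have hps : p < s.length := by
      rcases Nat.lt_succ_iff_lt_or_eq.mp hp with h | rfl
      · exact h
      · rw [List.getElem?_concat_length] at hl
        exact absurd (Option.some.inj hl) h1
    refine ⟨p, hps, ?_, ?_⟩
    · rwa [List.getElem?_append, if_pos hps] at hl
    · intro q hq1 hq2
      have := hq q hq1 (by omega)
      rwa [List.getElem?_append, if_pos hq2] at this
  · rintro ⟨p, hp, hl, hq⟩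
    refine ⟨p, by omega, ?_, ?_⟩
    · rwa [List.getElem?_append, if_pos hp]
    · intro q hq1 hq2
      rcases Nat.lt_succ_iff_lt_or_eq.mp hq2 with h | rfl
      · rw [List.getElem?_append, if_pos h]
        exact hq q hq1 h
      · rw [List.getElem?_concat_length]
        intro hc
        exact h2 (Option.some.inj hc)

lemma last_delim_iff (t : List Token) :
    (t.filter isDelim).getLast? = some lbrack ↔
      ∃ p : ℕ, p < t.length ∧ t[p]? = some lbrack ∧
        ∀ q : ℕ, p < q → q < t.length → t[q]? ≠ some rbrack := by
  induction t using List.reverseRecOn with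
  | nil => simp
  | append_singleton s a ih =>
    rw [List.filter_append]
    match a with
    | lbrack =>
      rw [show List.filter isDelim [lbrack] = [lbrack] from rfl, List.getLast?_concat]
      simp only [List.length_append, List.length_singleton]
      constructor
      · intro _
        refine ⟨s.length, by omega, List.getElem?_concat_length, ?_⟩
        intro q hq1 hq2; omega
      · intro _; trivial
    | rbrack =>
      rw [show List.filter isDelim [rbrack] = [rbrack] from rfl, List.getLast?_concat]
      simp only [List.length_append, List.length_singleton]
      constructor
      · intro h; exact absurd (Option.some.inj h) (by intro h; cases h)
      · rintro ⟨p, hp, hl, hq⟩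
        exfalso
        have hps : p < s.length := by
          rcases Nat.lt_succ_iff_lt_or_eq.mp hp with h | rfl
          · exact h
          · rw [List.getElem?_concat_length] at hl
            cases Option.some.inj hl
        exact hq s.length hps (by omega) List.getElem?_concat_length
    | zero =>
      rw [show List.filter isDelim [zero] = [] from rfl, List.append_nil,
        extend_nondelim s zero (by intro h; cases h) (by intro h; cases h)]
      exact ih
    | one =>
      rw [show List.filter isDelim [one] = [] from rfl, List.append_nil,
        extend_nondelim s one (by intro h; cases h) (by intro h; cases h)]
      exact ih

/-- If the delimiter tokens of `l` read in order are `k` copies of the pair `[, ]`,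
then a length-`n` prefix has exactly one more `'['` than `']'` iff there is a
position `p < n` holding `'['` with no `']'` strictly between `p` and `n`. -/
theorem prefix_bracket_excess_iff_inside_region
    (k : ℕ) (l : List Token)
    (hdelim : l.filter isDelim = (List.replicate k [lbrack, rbrack]).flatten) :
    ∀ n : ℕ, n ≤ l.length →
      ((l.take n).count lbrack = (l.take n).count rbrack + 1 ↔
        ∃ p : ℕ, p < n ∧ l[p]? = some lbrack ∧
          ∀ q : ℕ, p < q → q < n → l[q]? ≠ some rbrack) := by
  intro n hn
  set t := l.take n with ht
  have hlen : t.length = n := by rw [ht, List.length_take]; omega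
  have hpref : t.filter isDelim <+: (List.replicate k [lbrack, rbrack]).flatten := by
    rw [← hdelim]; exact List.IsPrefix.filter isDelim (List.take_prefix n l)
  have hcl : (t.filter isDelim).count lbrack = t.count lbrack :=
    List.count_filter rfl
  have hcr : (t.filter isDelim).count rbrack = t.count rbrack :=
    List.count_filter rfl
  have h1 := alt_count k (t.filter isDelim) hpref
  rw [hcl, hcr] at h1
  rw [h1, last_delim_iff t, hlen]
  constructor
  · rintro ⟨p, hp, hl, hq⟩
    rw [ht, List.getElem?_take, if_pos hp] at hl
    refine ⟨p, hp, hl, ?_⟩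
    intro q hq1 hq2
    have := hq q hq1 hq2
    rwa [ht, List.getElem?_take, if_pos hq2] at this
  · rintro ⟨p, hp, hl, hq⟩
    refine ⟨p, hp, ?_, ?_⟩
    · rwa [ht, List.getElem?_take, if_pos hp]
    · intro q hq1 hq2
      rw [ht, List.getElem?_take, if_pos hq2]
      exact hq q hq1 hq2
end
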